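/- Let f : ℝⁿ → ℝⁿ be locally Lipschitz with f(0) = 0, and let S ⊆ ℝⁿ be a compact set with 0 ∈ S that is forward invariant for the ODE ẋ = f(x). Suppose V : ℝⁿ → ℝ is continuously differentiable and satisfies ⟨∇V(x), f(x)⟩ < 0 for all x ∈ S \ {0} and ⟨∇V(0), f(0)⟩ = 0. Then every solution x(·) of ẋ = f(x) with x(0) ∈ S satisfies x(t) → 0 as t → ∞; in particular, S is contained in the region of attraction of the equilibrium 0. -/

import Mathlib

open Filter Set

/-- A curve `x` is a solution of `ẋ = f(x)` on the time interval `[0, T)` (with `T ∈ (0, ∞]`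
encoded as an extended real number). -/
def IsSolOn {E : Type*} [NormedAddCommGroup E] [NormedSpace ℝ E]
    (f : E → E) (x : ℝ → E) (T : EReal) : Prop :=
  ∀ t : ℝ, 0 ≤ t → (t : EReal) < T → HasDerivWithinAt x (f (x t)) (Set.Ici 0) t

/-- A set `S` is forward invariant for `ẋ = f(x)` if every solution on `[0, T)` with
`x 0 ∈ S` stays in `S`. -/
def FwdInv {E : Type*} [NormedAddCommGroup E] [NormedSpace ℝ E]
    (f : E → E) (S : Set E) : Prop :=
  ∀ (T : EReal) (x : ℝ → E), 0 < T → IsSolOn f x T → x 0 ∈ S →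
    ∀ t : ℝ, 0 ≤ t → (t : EReal) < T → x t ∈ S

/-- Corollary 1: if `S` is a compact forward invariant set containing the equilibrium `0`,
and `V` is a `C¹` function with `⟨∇V(x), f(x)⟩ < 0` on `S \ {0}` and `⟨∇V(0), f(0)⟩ = 0`,
then every solution starting in `S` converges to `0`, i.e. `S` is contained in the region of
attraction of `0`. -/
theorem stmt0 {n : ℕ} (f : EuclideanSpace ℝ (Fin n) → EuclideanSpace ℝ (Fin n))
    (hf : LocallyLipschitz f) (hf0 : f 0 = 0)
    (S : Set (EuclideanSpace ℝ (Fin n))) (hScomp : IsCompact S)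
    (h0S : (0 : EuclideanSpace ℝ (Fin n)) ∈ S)
    (hSinv : FwdInv f S)
    (V : EuclideanSpace ℝ (Fin n) → ℝ) (hV : ContDiff ℝ 1 V)
    (hVdec : ∀ x ∈ S, x ≠ 0 → inner (𝕜 := ℝ) (gradient V x) (f x) < (0 : ℝ))
    (hV0 : inner (𝕜 := ℝ) (gradient V 0) (f 0) = (0 : ℝ)) :
    ∀ x : ℝ → EuclideanSpace ℝ (Fin n), IsSolOn f x (⊤ : EReal) → x 0 ∈ S →
      Tendsto x atTop (nhds 0) := by
  intro x hsol hx0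
  -- the "Lyapunov derivative" function
  set g : EuclideanSpace ℝ (Fin n) → ℝ := fun y => fderiv ℝ V y (f y) with hg_def
  have hg_inner : ∀ y, inner (𝕜 := ℝ) (gradient V y) (f y) = g y := by
    intro y; simp [hg_def, gradient, InnerProductSpace.toDual_symm_apply]
  have hg_cont : Continuous g := (hV.continuous_fderiv one_ne_zero).clm_apply hf.continuous
  -- the orbit stays in S
  have hxS : ∀ t, 0 ≤ t → x t ∈ S := fun t ht =>
    hSinv ⊤ x (by norm_num) hsol hx0 t ht (EReal.coe_lt_top t)
  -- derivative of V ∘ x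
  have hφd : ∀ s : ℝ, 0 < s → HasDerivAt (fun t => V (x t)) (g (x s)) s := by
    intro s hs
    have hxd : HasDerivAt x (f (x s)) s :=
      (hsol s hs.le (EReal.coe_lt_top s)).hasDerivAt (Ici_mem_nhds hs)
    exact ((hV.differentiable one_ne_zero).differentiableAt.hasFDerivAt.comp_hasDerivAt s hxd)
  -- continuity of x on [0, ∞)
  have hxcont : ContinuousOn x (Ici 0) := fun t ht =>
    (hsol t ht (EReal.coe_lt_top t)).continuousWithinAt
  have hφcont : ContinuousOn (fun t => V (x t)) (Ici 0) :=
    hV.continuous.comp_continuousOn hxcont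
  -- g ≤ 0 on S
  have hg_nonpos : ∀ y ∈ S, g y ≤ 0 := by
    intro y hy
    rcases eq_or_ne y 0 with rfl | hy0
    · rw [← hg_inner]; rw [hV0]
    · exact ((hg_inner y) ▸ hVdec y hy hy0).le
  -- V ∘ x is antitone on [0, ∞)
  have hanti : AntitoneOn (fun t => V (x t)) (Ici 0) := by
    apply antitoneOn_of_deriv_nonpos (convex_Ici 0) hφcont
    · intro s hs
      rw [interior_Ici] at hs
      exact (hφd s hs).differentiableAt.differentiableWithinAt
    · intro s hs
      rw [interior_Ici] at hs
      rw [(hφd s hs).deriv]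
      exact hg_nonpos (x s) (hxS s hs.le)
  -- lower bound for V on S
  obtain ⟨z, hzS, hzmin'⟩ := hScomp.exists_isMinOn ⟨0, h0S⟩ hV.continuous.continuousOn
  have hzmin : ∀ y ∈ S, V z ≤ V y := fun y hy => hzmin' hy
  set m : ℝ := V z with hm_def
  have hlow : ∀ t, 0 ≤ t → m ≤ V (x t) := fun t ht => hzmin (x t) (hxS t ht)
  -- suppose x does not tend to 0
  by_contra hcon
  rw [Metric.tendsto_atTop] at hcon
  push_neg at hcon
  obtain ⟨ε, hε, hcon⟩ := hcon
  -- compact set away from 0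
  set K : Set (EuclideanSpace ℝ (Fin n)) := S ∩ {y | ε ≤ dist y 0} with hK_def
  have hKcomp : IsCompact K :=
    hScomp.inter_right (isClosed_le continuous_const ((continuous_id.dist continuous_const)))
  have hfreq : ∃ᶠ t in atTop, x t ∈ K := by
    rw [frequently_atTop]
    intro N
    obtain ⟨t, ht1, ht2⟩ := hcon (max N 0)
    exact ⟨t, le_trans (le_max_left N 0) ht1,
      ⟨hxS t (le_trans (le_max_right N 0) ht1), ht2⟩⟩
  -- get a cluster point p in K
  have hneF : (map x atTop ⊓ 𝓟 K).NeBot := by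
    rw [Filter.frequently_iff_neBot] at hfreq
    have h1 : (map x (atTop ⊓ 𝓟 {t | x t ∈ K})).NeBot := hfreq.map x
    refine h1.mono (le_inf (map_mono inf_le_left) ?_)
    refine le_trans (map_mono inf_le_right) ?_
    rw [map_principal]
    exact principal_mono.2 (image_preimage_subset x K)
  obtain ⟨p, hpK, hp⟩ := hKcomp.exists_clusterPt (f := map x atTop ⊓ 𝓟 K) inf_le_right
  have hmcp : MapClusterPt p atTop x := hp.mono inf_le_left
  have hpS : p ∈ S := hpK.1
  have hp0 : p ≠ 0 := by
    intro h
    have h2 : ε ≤ dist p 0 := hpK.2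
    rw [h, dist_self] at h2
    linarith
  -- g p < 0, choose δ and r
  have hgp : g p < 0 := (hg_inner p) ▸ hVdec p hpS hp0
  set δ : ℝ := -g p / 2 with hδ_def
  have hδ : 0 < δ := by simp [hδ_def]; linarith
  have hgp' : g p < -δ := by simp [hδ_def]; linarith
  obtain ⟨r', hr', hball⟩ := Metric.mem_nhds_iff.1
    (hg_cont.continuousAt.preimage_mem_nhds (Iio_mem_nhds hgp'))
  set r : ℝ := r' / 2 with hr_def
  have hr : 0 < r := by positivity
  have hgr : ∀ y : EuclideanSpace ℝ (Fin n), dist y p ≤ r → g y ≤ -δ := by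
    intro y hy
    have : y ∈ Metric.ball p r' := by
      rw [Metric.mem_ball]; linarith
    exact (hball this).le
  -- bound on f
  obtain ⟨M, hM⟩ := hScomp.exists_bound_of_continuousOn hf.continuous.continuousOn
  have hfp : f p ≠ 0 := by
    intro h
    rw [hg_def] at hgp
    simp only [h, map_zero] at hgp
    exact absurd hgp (lt_irrefl 0)
  have hMpos : 0 < M := lt_of_lt_of_le (norm_pos_iff.2 hfp) (hM p hpS)
  set τ : ℝ := r / (2 * M) with hτ_def
  have hτ : 0 < τ := by positivity
  -- key claim: one visit near p costs δ * τ
  have claim : ∀ t₀ : ℝ, 0 ≤ t₀ → dist (x t₀) p < r / 2 →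
      V (x (t₀ + τ)) ≤ V (x t₀) - δ * τ := by
    intro t₀ ht₀ hnear
    set I : Set ℝ := Icc t₀ (t₀ + τ) with hI_def
    have hIsub : I ⊆ Ici 0 := fun u hu => le_trans ht₀ hu.1
    have hxI : ∀ s ∈ I, HasDerivWithinAt x (f (x s)) I s := fun s hs =>
      (hsol s (hIsub hs) (EReal.coe_lt_top s)).mono hIsub
    have hbound : ∀ s ∈ I, ‖f (x s)‖ ≤ M := fun s hs => hM (x s) (hxS s (hIsub hs))
    have ht₀I : t₀ ∈ I := ⟨le_refl t₀, by linarith⟩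
    have hclose : ∀ s ∈ I, dist (x s) p ≤ r := by
      intro s hs
      have h1 : ‖x s - x t₀‖ ≤ M * ‖s - t₀‖ :=
        Convex.norm_image_sub_le_of_norm_hasDerivWithin_le hxI hbound (convex_Icc _ _) ht₀I hs
      have h2 : ‖s - t₀‖ ≤ τ := by
        rw [Real.norm_eq_abs, abs_of_nonneg (by linarith [hs.1])]
        linarith [hs.2]
      have h3 : M * ‖s - t₀‖ ≤ M * τ := by nlinarith
      have h4 : M * τ = r / 2 := by rw [hτ_def, mul_div_assoc', mul_comm M r, mul_div_mul_right r 2 hMpos.ne']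
      calc dist (x s) p ≤ dist (x s) (x t₀) + dist (x t₀) p := dist_triangle _ _ _
        _ ≤ r / 2 + r / 2 := by
            rw [dist_eq_norm]
            exact add_le_add (by linarith) hnear.le
        _ = r := by ring
    have hgI : ∀ s ∈ I, g (x s) ≤ -δ := fun s hs => hgr (x s) (hclose s hs)
    have hdec : V (x (t₀ + τ)) - V (x t₀) ≤ -δ * (t₀ + τ - t₀) := by
      apply Convex.image_sub_le_mul_sub_of_deriv_le (convex_Icc _ _)
        (hφcont.mono hIsub) ?_ ?_ t₀ ht₀I (t₀ + τ) ⟨by linarith, le_refl _⟩ (by linarith)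
      · intro s hs
        simp only [hI_def, interior_Icc] at hs
        have hs0 : 0 < s := lt_of_le_of_lt ht₀ hs.1
        exact (hφd s hs0).differentiableAt.differentiableWithinAt
      · intro s hs
        simp only [hI_def, interior_Icc] at hs
        have hs0 : 0 < s := lt_of_le_of_lt ht₀ hs.1
        rw [(hφd s hs0).deriv]
        exact hgI s (Ioo_subset_Icc_self hs)
    have : t₀ + τ - t₀ = τ := by ring
    rw [this] at hdec
    linarith
  -- frequently near p
  have hnext : ∀ N : ℝ, ∃ t, 0 ≤ t ∧ N ≤ t ∧ dist (x t) p < r / 2 := by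
    have h := mapClusterPt_iff_frequently.1 hmcp (Metric.ball p (r / 2))
      (Metric.ball_mem_nhds p (by positivity))
    rw [frequently_atTop] at h
    intro N
    obtain ⟨t, ht1, ht2⟩ := h (max N 0)
    exact ⟨t, le_trans (le_max_right N 0) ht1, le_trans (le_max_left N 0) ht1,
      Metric.mem_ball.1 ht2⟩
  choose u hu0 huN hup using hnext
  -- recursive sequence of visits, spaced by τ
  set seq : ℕ → ℝ := fun k => Nat.rec (u 0) (fun _ t => u (t + τ)) k with hseq_def
  have hseq0 : ∀ k, 0 ≤ seq k := by
    intro k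
    cases k with
    | zero => exact hu0 0
    | succ k => exact hu0 _
  have hseqnear : ∀ k, dist (x (seq k)) p < r / 2 := by
    intro k
    cases k with
    | zero => exact hup 0
    | succ k => exact hup _
  have hstep : ∀ k, seq k + τ ≤ seq (k + 1) := fun k => huN (seq k + τ)
  have hdec : ∀ k, V (x (seq (k + 1))) ≤ V (x (seq k)) - δ * τ := by
    intro k
    have h1 : V (x (seq (k + 1))) ≤ V (x (seq k + τ)) :=
      hanti (mem_Ici.2 (by linarith [hseq0 k])) (mem_Ici.2 (hseq0 (k + 1))) (hstep k)
    have h2 := claim (seq k) (hseq0 k) (hseqnear k)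
    linarith
  have hsum : ∀ k : ℕ, V (x (seq k)) ≤ V (x (seq 0)) - k * (δ * τ) := by
    intro k
    induction k with
    | zero => simp
    | succ k ih =>
      have := hdec k
      push_cast
      push_cast at ih
      linarith
  obtain ⟨k, hk⟩ := exists_nat_gt ((V (x (seq 0)) - m) / (δ * τ))
  have hδτ : 0 < δ * τ := by positivity
  have h1 : V (x (seq 0)) - m < k * (δ * τ) := by
    rw [div_lt_iff₀ hδτ] at hk
    linarith
  have h2 := hsum k
  have h3 := hlow (seq k) (hseq0 k)
  linarith
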